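/- Translation property of the CDT: Let I₁ : ℝ → ℝ be a probability density with CDT (with respect to reference density I₀ on X) given by Î₁(x) = (f₁(x) − x)√(I₀(x)), where f₁ satisfies ∫_{inf X}^x I₀ = ∫_{−∞}^{f₁(x)} I₁. If I_μ(x) = I₁(x − μ), then the CDT of I_μ with respect to I₀ satisfies Î_μ(x) = Î₁(x) + μ√(I₀(x)) for all x ∈ X. -/
import Mathlib

open MeasureTheory Set

lemma shift_integral (I₁ : ℝ → ℝ) (μ a : ℝ) :
    ∫ τ in Iic a, I₁ (τ - μ) = ∫ τ in Iic (a - μ), I₁ τ := by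
  have h : ∫ τ in Iic a, I₁ (τ - μ)
      = ∫ τ : ℝ, (Iic (a - μ)).indicator I₁ (τ - μ) := by
    rw [← integral_indicator measurableSet_Iic]
    congr 1
    ext τ
    by_cases hτ : τ ≤ a
    · simp [indicator_apply, hτ]
    · simp [indicator_apply, hτ]
  rw [h, integral_sub_right_eq_self ((Iic (a - μ)).indicator I₁) μ,
    integral_indicator measurableSet_Iic]

lemma F_strictMono (I₁ : ℝ → ℝ) (hI₁pos : ∀ y : ℝ, 0 < I₁ y)
    (hI₁int : Integrable I₁) :
    StrictMono (fun t => ∫ τ in Iic t, I₁ τ) := by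
  intro a b hab
  have h1 : (∫ τ in Iic b, I₁ τ) - ∫ τ in Iic a, I₁ τ = ∫ τ in Ioc a b, I₁ τ := by
    rw [intervalIntegral.integral_Iic_sub_Iic hI₁int.integrableOn hI₁int.integrableOn,
      intervalIntegral.integral_of_le hab.le]
  have h2 : 0 < ∫ τ in Ioc a b, I₁ τ := by
    apply setIntegral_pos_iff_support_of_nonneg_ae (by filter_upwards with x using (hI₁pos x).le) hI₁int.integrableOn |>.mpr
    have : Function.support I₁ = univ := by
      ext x; simp [Function.support, (hI₁pos x).ne']
    rw [this, univ_inter]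
    simpa [Real.volume_Ioc] using hab
  linarith

theorem cdt_translation
    (X : Set ℝ) (hX : X.OrdConnected)
    (I₀ I₁ : ℝ → ℝ) (μ : ℝ)
    (hI₀pos : ∀ x ∈ X, 0 < I₀ x) (hI₁pos : ∀ y : ℝ, 0 < I₁ y)
    (hI₁int : Integrable I₁) (hI₁tot : ∫ τ : ℝ, I₁ τ = 1)
    (hI₀int : IntegrableOn I₀ X) (hI₀tot : ∫ τ in X, I₀ τ = 1)
    (f₁ fμ : ℝ → ℝ)
    (hf₁ : ∀ x ∈ X, ∫ τ in Iic (f₁ x), I₁ τ = ∫ τ in sInf X..x, I₀ τ)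
    (hfμ : ∀ x ∈ X, ∫ τ in Iic (fμ x), I₁ (τ - μ) = ∫ τ in sInf X..x, I₀ τ) :
    ∀ x ∈ X,
      (fμ x - x) * Real.sqrt (I₀ x)
        = (f₁ x - x) * Real.sqrt (I₀ x) + μ * Real.sqrt (I₀ x) := by
  intro x hx
  have key : fμ x - μ = f₁ x := by
    apply (F_strictMono I₁ hI₁pos hI₁int).injective
    simp only
    rw [← shift_integral I₁ μ (fμ x), hfμ x hx, hf₁ x hx]
  have : fμ x = f₁ x + μ := by linarith
  rw [this]; ring
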